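/- Let b_{mn} (m,n ∈ ℤ) be the generalized Grunsky coefficients of a normalized disjoint pair (f,g) of univalent functions whose complementary set F = ℂ∖(f(𝔻)∪g(𝔻*)) has Lebesgue measure zero, and let B₁,B₂,B₃,B₄ be the associated operators on ℓ², (B₁)_{mn}=√(mn) b_{−m,−n}, (B₂)_{mn}=√(mn) b_{−m,n}, (B₃)_{mn}=√(mn) b_{m,−n}, (B₄)_{mn}=√(mn) b_{mn}. Then B₁B₁* + B₂B₂* = I, B₃B₁* + B₄B₂* = 0, B₁B₃* + B₂B₄* = 0, and B₃B₃* + B₄B₄* = I; equivalently the block operator 𝐁 = (B₁ B₂; B₃ B₄) on ℓ²⊕ℓ² satisfies 𝐁𝐁* = I. -/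

import Mathlib

open ContinuousLinearMap

noncomputable section

/-- The Hilbert space ℓ² of square-summable complex sequences (indexed from 0;
    the index n ∈ ℕ corresponds to the classical index n+1 ≥ 1). -/
abbrev Hl2 : Type := lp (fun _ : ℕ => ℂ) 2

/-- The standard orthonormal basis vector of ℓ². -/
def el (n : ℕ) : Hl2 := lp.single 2 n 1

local notation "⟪" x ", " y "⟫" => @inner ℂ _ _ x y

private lemma coord_eq_inner (x : Hl2) (m : ℕ) : (x : ∀ _ : ℕ, ℂ) m = ⟪el m, x⟫ := by
  rw [el, lp.inner_single_left]
  simp [RCLike.inner_apply]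

private lemma adj_coord (X : Hl2 →L[ℂ] Hl2) (m j : ℕ) :
    (adjoint X (el m) : ∀ _ : ℕ, ℂ) j = (starRingEnd ℂ) ((X (el j) : ∀ _ : ℕ, ℂ) m) := by
  rw [coord_eq_inner, adjoint_inner_right]
  rw [show el m = lp.single 2 m 1 from rfl, lp.inner_single_right]
  simp [RCLike.inner_apply]

private lemma hs_comp_adj (X Y : Hl2 →L[ℂ] Hl2) (m n : ℕ) :
    HasSum (fun j : ℕ => (X (el j) : ∀ _ : ℕ, ℂ) m * (starRingEnd ℂ) ((Y (el j) : ∀ _ : ℕ, ℂ) n))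
      (((X.comp (adjoint Y)) (el n) : ∀ _ : ℕ, ℂ) m) := by
  have h := lp.hasSum_inner (𝕜 := ℂ) (adjoint X (el m)) (adjoint Y (el n))
  have hfun : (fun j : ℕ => ⟪(adjoint X (el m) : ∀ _ : ℕ, ℂ) j, (adjoint Y (el n) : ∀ _ : ℕ, ℂ) j⟫)
      = fun j : ℕ => (X (el j) : ∀ _ : ℕ, ℂ) m * (starRingEnd ℂ) ((Y (el j) : ∀ _ : ℕ, ℂ) n) := by
    funext j
    rw [RCLike.inner_apply, adj_coord, adj_coord]
    simp
    ring
  have hval : ⟪adjoint X (el m), adjoint Y (el n)⟫ = ((X.comp (adjoint Y)) (el n) : ∀ _ : ℕ, ℂ) m := by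
    rw [adjoint_inner_left, ← coord_eq_inner, comp_apply]
  rw [hfun, hval] at h
  exact h

private lemma clm_ext_el {T S : Hl2 →L[ℂ] Hl2} (h : ∀ n, T (el n) = S (el n)) : T = S := by
  ext f
  have hf : HasSum (fun i => lp.single 2 i ((f : ∀ _ : ℕ, ℂ) i)) f :=
    lp.hasSum_single (by norm_num) f
  have hsingle : ∀ i, lp.single 2 i ((f : ∀ _ : ℕ, ℂ) i) = (f : ∀ _ : ℕ, ℂ) i • el i := by
    intro i
    apply lp.ext
    funext j
    by_cases hj : j = i <;> simp [el, lp.single_apply, hj]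
  have hT : HasSum (fun i => (f : ∀ _ : ℕ, ℂ) i • T (el i)) (T f) := by
    have := hf.mapL T
    simpa [hsingle, map_smul] using this
  have hS : HasSum (fun i => (f : ∀ _ : ℕ, ℂ) i • T (el i)) (S f) := by
    have := hf.mapL S
    simp only [hsingle, map_smul] at this ⊢
    simpa [h] using this
  exact congrFun (congrArg _ (hT.unique hS)) _

private def Amat (b : ℤ → ℤ → ℂ) (k j : ℤ) : ℂ :=
  (Real.sqrt ((|k * j| : ℤ) : ℝ) : ℂ) * b k j

private def GrunskyEq (b : ℤ → ℤ → ℂ) : Prop :=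
  ∀ l : ℤ → ℂ, (Function.support l).Finite → l 0 = 0 →
    ∑' k : ℤ, ‖∑' j : ℤ, (Real.sqrt ((|k * j| : ℤ) : ℝ) : ℂ) * b k j * l j‖ ^ 2
      = ∑' k : ℤ, ‖l k‖ ^ 2

private lemma hcol {b : ℤ → ℤ → ℂ} (hG : GrunskyEq b) (k : ℤ) (hk : k ≠ 0) :
    ∑' j : ℤ, ‖Amat b j k‖ ^ 2 = 1 := by
  have hsupp : (Function.support fun j : ℤ => if j = k then (1:ℂ) else 0).Finite := by
    apply Set.Finite.subset (Set.finite_singleton k)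
    intro j hj
    simp only [Set.mem_singleton_iff]
    by_contra h
    exact hj (if_neg h)
  have hz : (if (0:ℤ) = k then (1:ℂ) else 0) = 0 := if_neg fun h => hk h.symm
  have h := hG (fun j => if j = k then (1:ℂ) else 0) hsupp hz
  have hinner : ∀ row : ℤ,
      (∑' j : ℤ, (Real.sqrt ((|row * j| : ℤ) : ℝ) : ℂ) * b row j * (if j = k then (1:ℂ) else 0))
        = Amat b row k := by
    intro row
    have hfun : (fun j : ℤ => (Real.sqrt ((|row * j| : ℤ) : ℝ) : ℂ) * b row j * (if j = k then (1:ℂ) else 0))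
        = fun j : ℤ => if j = k then Amat b row k else 0 := by
      funext j
      by_cases hj : j = k
      · subst hj; simp [Amat]
      · simp [hj]
    rw [hfun, tsum_ite_eq]
  have hr : (∑' j : ℤ, ‖(if j = k then (1:ℂ) else 0)‖ ^ 2) = 1 := by
    have hfun : (fun j : ℤ => ‖(if j = k then (1:ℂ) else 0)‖ ^ 2)
        = fun j : ℤ => if j = k then (1:ℝ) else 0 := by
      funext j; by_cases hj : j = k <;> simp [hj]
    rw [hfun, tsum_ite_eq]
  simp only [hinner] at h
  rw [hr] at h
  exact h

private lemma colSummable {b : ℤ → ℤ → ℂ} (hG : GrunskyEq b) (k : ℤ) (hk : k ≠ 0) :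
    Summable fun j : ℤ => ‖Amat b j k‖ ^ 2 := by
  by_contra hns
  have := hcol hG k hk
  rw [tsum_eq_zero_of_not_summable hns] at this
  exact one_ne_zero this.symm

private lemma crossSummable {b : ℤ → ℤ → ℂ} (hG : GrunskyEq b) (k k' : ℤ) (hk : k ≠ 0)
    (hk' : k' ≠ 0) :
    Summable fun j : ℤ => Amat b j k * (starRingEnd ℂ) (Amat b j k') := by
  apply Summable.of_norm
  apply Summable.of_nonneg_of_le (fun j => norm_nonneg _) (fun j => ?_)
    (((colSummable hG k hk).add (colSummable hG k' hk')).mul_left (1/2))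
  rw [norm_mul, RCLike.norm_conj]
  nlinarith [sq_nonneg (‖Amat b j k‖ - ‖Amat b j k'‖),
    norm_nonneg (Amat b j k), norm_nonneg (Amat b j k')]

private lemma habs {b : ℤ → ℤ → ℂ} (hG : GrunskyEq b) (k k' : ℤ) (hk : k ≠ 0) (hk' : k' ≠ 0)
    (hne : k ≠ k') (c d : ℂ) :
    ∑' row : ℤ, ‖c * Amat b row k + d * Amat b row k'‖ ^ 2
      = ‖c‖ ^ 2 + ‖d‖ ^ 2 := by
  set l : ℤ → ℂ := fun j => if j = k then c else if j = k' then d else 0 with hl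
  have hsupp : (Function.support l).Finite := by
    apply Set.Finite.subset ((Set.finite_singleton k).insert k' |>.insert k)
    intro j hj
    simp only [Set.mem_insert_iff, Set.mem_singleton_iff]
    by_contra h
    push_neg at h
    exact hj (by simp [hl, h.1, h.2.1])
  have hz : l 0 = 0 := by
    show (if (0:ℤ) = k then c else if (0:ℤ) = k' then d else 0) = 0
    rw [if_neg fun h => hk h.symm, if_neg fun h => hk' h.symm]
  have h := hG l hsupp hz
  have hinner : ∀ row : ℤ,
      (∑' j : ℤ, (Real.sqrt ((|row * j| : ℤ) : ℝ) : ℂ) * b row j * l j)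
        = c * Amat b row k + d * Amat b row k' := by
    intro row
    rw [tsum_eq_sum (s := ({k, k'} : Finset ℤ)) ?_]
    · rw [Finset.sum_pair hne]
      have hlk : l k = c := if_pos rfl
      have hlk' : l k' = d := by
        show (if k' = k then c else if k' = k' then d else 0) = d
        rw [if_neg fun h => hne h.symm, if_pos rfl]
      rw [hlk, hlk']
      show Amat b row k * c + Amat b row k' * d = _
      ring
    · intro j hj
      simp only [Finset.mem_insert, Finset.mem_singleton] at hj
      push_neg at hj
      have : l j = 0 := by simp [hl, hj.1, hj.2]
      rw [this, mul_zero]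
  have hr : (∑' j : ℤ, ‖l j‖ ^ 2) = ‖c‖ ^ 2 + ‖d‖ ^ 2 := by
    rw [tsum_eq_sum (s := ({k, k'} : Finset ℤ)) ?_]
    · rw [Finset.sum_pair hne]
      have hlk : l k = c := if_pos rfl
      have hlk' : l k' = d := by
        show (if k' = k then c else if k' = k' then d else 0) = d
        rw [if_neg fun h => hne h.symm, if_pos rfl]
      rw [hlk, hlk']
    · intro j hj
      simp only [Finset.mem_insert, Finset.mem_singleton] at hj
      push_neg at hj
      have : l j = 0 := by simp [hl, hj.1, hj.2]
      rw [this]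
      simp
  simp only [hinner] at h
  rw [hr] at h
  exact h

private lemma ortho {b : ℤ → ℤ → ℂ} (hG : GrunskyEq b) (k k' : ℤ) (hk : k ≠ 0) (hk' : k' ≠ 0) :
    ∑' j : ℤ, Amat b j k * (starRingEnd ℂ) (Amat b j k') = if k = k' then 1 else 0 := by
  by_cases hkk : k = k'
  · subst hkk
    rw [if_pos rfl]
    have hfun : (fun j : ℤ => Amat b j k * (starRingEnd ℂ) (Amat b j k))
        = fun j : ℤ => ((‖Amat b j k‖ ^ 2 : ℝ) : ℂ) := by
      funext j
      rw [Complex.mul_conj, Complex.sq_norm]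
    rw [hfun, ← Complex.ofReal_tsum, hcol hG k hk, Complex.ofReal_one]
  · rw [if_neg hkk]
    set S := ∑' j : ℤ, Amat b j k * (starRingEnd ℂ) (Amat b j k') with hS
    have expand : ∀ c d : ℂ,
        ‖c‖ ^ 2 + ‖d‖ ^ 2 + 2 * (c * (starRingEnd ℂ) d * S).re
          = ‖c‖ ^ 2 + ‖d‖ ^ 2 := by
      intro c d
      have h := habs hG k k' hk hk' hkk c d
      have hpt : ∀ row : ℤ, ‖c * Amat b row k + d * Amat b row k'‖ ^ 2
          = ‖c‖ ^ 2 * ‖Amat b row k‖ ^ 2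
            + ‖d‖ ^ 2 * ‖Amat b row k'‖ ^ 2
            + 2 * (c * (starRingEnd ℂ) d
                * (Amat b row k * (starRingEnd ℂ) (Amat b row k'))).re := by
        intro row
        rw [Complex.sq_norm, Complex.normSq_add]
        congr 1
        · rw [Complex.normSq_mul, Complex.normSq_mul]
          simp only [Complex.sq_norm]
        · congr 1
          rw [map_mul]
          ring_nf
      have s1 : Summable (fun row : ℤ => ‖c‖ ^ 2 * ‖Amat b row k‖ ^ 2) :=
        (colSummable hG k hk).mul_left _
      have s2 : Summable (fun row : ℤ => ‖d‖ ^ 2 * ‖Amat b row k'‖ ^ 2) :=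
        (colSummable hG k' hk').mul_left _
      have scross : Summable (fun row : ℤ =>
          c * (starRingEnd ℂ) d * (Amat b row k * (starRingEnd ℂ) (Amat b row k'))) :=
        (crossSummable hG k k' hk hk').mul_left _
      have s3 : Summable (fun row : ℤ => 2 * (c * (starRingEnd ℂ) d
          * (Amat b row k * (starRingEnd ℂ) (Amat b row k'))).re) := by
        apply Summable.mul_left
        exact (scross.map Complex.reCLM.toLinearMap.toAddMonoidHom Complex.reCLM.continuous)
      simp only [hpt] at h
      rw [Summable.tsum_add (s1.add s2) s3, Summable.tsum_add s1 s2, tsum_mul_left, tsum_mul_left,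
        hcol hG k hk, hcol hG k' hk', tsum_mul_left] at h
      have hre : (∑' row : ℤ, (c * (starRingEnd ℂ) d
          * (Amat b row k * (starRingEnd ℂ) (Amat b row k'))).re)
          = (c * (starRingEnd ℂ) d * S).re := by
        have := Complex.reCLM.map_tsum scross
        rw [tsum_mul_left] at this
        exact this.symm
      rw [hre] at h
      simpa using h
    have hre0 : S.re = 0 := by
      have := expand 1 1
      simp at this
      simpa using this
    have him0 : S.im = 0 := by
      have := expand 1 Complex.I
      simp [Complex.mul_re, Complex.conj_I] at this
      simpa using this
    exact Complex.ext hre0 him0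

private lemma entry {b : ℤ → ℤ → ℂ} (hG : GrunskyEq b) (X Y X' Y' : Hl2 →L[ℂ] Hl2)
    (m n : ℕ) (k k' : ℤ) (hk : k ≠ 0) (hk' : k' ≠ 0)
    (hX : ∀ j : ℕ, (X (el j) : ∀ _ : ℕ, ℂ) m = Amat b (-((j:ℤ) + 1)) k)
    (hY : ∀ j : ℕ, (Y (el j) : ∀ _ : ℕ, ℂ) n = Amat b (-((j:ℤ) + 1)) k')
    (hX' : ∀ j : ℕ, (X' (el j) : ∀ _ : ℕ, ℂ) m = Amat b ((j:ℤ) + 1) k)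
    (hY' : ∀ j : ℕ, (Y' (el j) : ∀ _ : ℕ, ℂ) n = Amat b ((j:ℤ) + 1) k') :
    ((X.comp (adjoint Y) + X'.comp (adjoint Y')) (el n) : ∀ _ : ℕ, ℂ) m
      = if k = k' then 1 else 0 := by
  set F : ℤ → ℂ := fun j => Amat b j k * (starRingEnd ℂ) (Amat b j k') with hF
  have h1 : HasSum (fun j : ℕ => F (-((j:ℤ) + 1)))
      (((X.comp (adjoint Y)) (el n) : ∀ _ : ℕ, ℂ) m) := by
    have := hs_comp_adj X Y m n
    simpa only [hX, hY, hF] using this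
  have h2 : HasSum (fun j : ℕ => F ((j:ℤ) + 1))
      (((X'.comp (adjoint Y')) (el n) : ∀ _ : ℕ, ℂ) m) := by
    have := hs_comp_adj X' Y' m n
    simpa only [hX', hY', hF] using this
  have hz : F 0 = 0 := by simp [hF, Amat]
  have htot := HasSum.of_add_one_of_neg_add_one h2 h1
  rw [hz, add_zero] at htot
  have hts := htot.tsum_eq
  rw [ortho hG k k' hk hk'] at hts
  have hcoord : ((X.comp (adjoint Y) + X'.comp (adjoint Y')) (el n) : ∀ _ : ℕ, ℂ) m
      = ((X.comp (adjoint Y)) (el n) : ∀ _ : ℕ, ℂ) m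
        + ((X'.comp (adjoint Y')) (el n) : ∀ _ : ℕ, ℂ) m := by
    simp
  rw [hcoord, hts]
  ring

private lemma amat_helper {b : ℤ → ℤ → ℂ} (hsym : ∀ m n : ℤ, b m n = b n m) (u v : ℤ)
    (m j : ℕ) (hu : u = ((m+1 : ℕ) : ℤ) ∨ u = -((m+1 : ℕ) : ℤ))
    (hv : v = ((j+1 : ℕ) : ℤ) ∨ v = -((j+1 : ℕ) : ℤ)) :
    Amat b v u = (Real.sqrt (((m + 1) * (j + 1) : ℕ)) : ℂ) * b u v := by
  have h1 : |v| = ((j+1 : ℕ) : ℤ) := by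
    rcases hv with h | h <;> subst h
    · exact abs_of_nonneg (by positivity)
    · rw [abs_neg]; exact abs_of_nonneg (by positivity)
  have h2 : |u| = ((m+1 : ℕ) : ℤ) := by
    rcases hu with h | h <;> subst h
    · exact abs_of_nonneg (by positivity)
    · rw [abs_neg]; exact abs_of_nonneg (by positivity)
  unfold Amat
  rw [abs_mul, h1, h2, hsym]
  congr 3
  push_cast
  ring


/-- Given Grunsky coefficients b_{mn} (m,n ∈ ℤ) of a normalized disjoint pair
    satisfying the generalized Grunsky equality (Hummel; this holds exactly when
    the complementary set F has zero Lebesgue measure), the associated operators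
    B₁,B₂,B₃,B₄ on ℓ² with matrix entries √(mn)·b_{∓m,∓n} satisfy
    B₁B₁* + B₂B₂* = I, B₃B₁* + B₄B₂* = 0, B₁B₃* + B₂B₄* = 0, B₃B₃* + B₄B₄* = I,
    i.e. the block operator 𝐁 = (B₁ B₂; B₃ B₄) satisfies 𝐁𝐁* = I. -/
theorem stmt_7 (b : ℤ → ℤ → ℂ)
    (hsym : ∀ m n : ℤ, b m n = b n m)
    (hGrunsky : ∀ l : ℤ → ℂ, (Function.support l).Finite → l 0 = 0 →
      ∑' k : ℤ,
          ‖∑' j : ℤ, (Real.sqrt ((|k * j| : ℤ) : ℝ) : ℂ) * b k j * l j‖ ^ 2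
        = ∑' k : ℤ, ‖l k‖ ^ 2)
    (B₁ B₂ B₃ B₄ : Hl2 →L[ℂ] Hl2)
    (hB₁ : ∀ m n : ℕ, (B₁ (el n) : ∀ _ : ℕ, ℂ) m
      = (Real.sqrt (((m + 1) * (n + 1) : ℕ)) : ℂ) * b (-(m + 1 : ℕ)) (-(n + 1 : ℕ)))
    (hB₂ : ∀ m n : ℕ, (B₂ (el n) : ∀ _ : ℕ, ℂ) m
      = (Real.sqrt (((m + 1) * (n + 1) : ℕ)) : ℂ) * b (-(m + 1 : ℕ)) ((n + 1 : ℕ)))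
    (hB₃ : ∀ m n : ℕ, (B₃ (el n) : ∀ _ : ℕ, ℂ) m
      = (Real.sqrt (((m + 1) * (n + 1) : ℕ)) : ℂ) * b ((m + 1 : ℕ)) (-(n + 1 : ℕ)))
    (hB₄ : ∀ m n : ℕ, (B₄ (el n) : ∀ _ : ℕ, ℂ) m
      = (Real.sqrt (((m + 1) * (n + 1) : ℕ)) : ℂ) * b ((m + 1 : ℕ)) ((n + 1 : ℕ))) :
    B₁.comp (adjoint B₁) + B₂.comp (adjoint B₂) = 1
      ∧ B₃.comp (adjoint B₁) + B₄.comp (adjoint B₂) = 0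
      ∧ B₁.comp (adjoint B₃) + B₂.comp (adjoint B₄) = 0
      ∧ B₃.comp (adjoint B₃) + B₄.comp (adjoint B₄) = 1 := by
  have hG : GrunskyEq b := hGrunsky
  have cneg₁ : ∀ m j : ℕ, (B₁ (el j) : ∀ _ : ℕ, ℂ) m = Amat b (-((j:ℤ) + 1)) (-((m:ℤ) + 1)) := by
    intro m j
    rw [hB₁ m j,
      ← amat_helper hsym (-((m+1 : ℕ) : ℤ)) (-((j+1 : ℕ) : ℤ)) m j (Or.inr rfl) (Or.inr rfl)]
    push_cast
    rfl
  have cpos₂ : ∀ m j : ℕ, (B₂ (el j) : ∀ _ : ℕ, ℂ) m = Amat b ((j:ℤ) + 1) (-((m:ℤ) + 1)) := by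
    intro m j
    rw [hB₂ m j,
      ← amat_helper hsym (-((m+1 : ℕ) : ℤ)) (((j+1 : ℕ) : ℤ)) m j (Or.inr rfl) (Or.inl rfl)]
    push_cast
    rfl
  have cneg₃ : ∀ m j : ℕ, (B₃ (el j) : ∀ _ : ℕ, ℂ) m = Amat b (-((j:ℤ) + 1)) ((m:ℤ) + 1) := by
    intro m j
    rw [hB₃ m j,
      ← amat_helper hsym (((m+1 : ℕ) : ℤ)) (-((j+1 : ℕ) : ℤ)) m j (Or.inl rfl) (Or.inr rfl)]
    push_cast
    rfl
  have cpos₄ : ∀ m j : ℕ, (B₄ (el j) : ∀ _ : ℕ, ℂ) m = Amat b ((j:ℤ) + 1) ((m:ℤ) + 1) := by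
    intro m j
    rw [hB₄ m j,
      ← amat_helper hsym (((m+1 : ℕ) : ℤ)) (((j+1 : ℕ) : ℤ)) m j (Or.inl rfl) (Or.inl rfl)]
    push_cast
    rfl
  refine ⟨?_, ?_, ?_, ?_⟩
  · refine clm_ext_el fun n => lp.ext (funext fun m => ?_)
    rw [entry hG B₁ B₁ B₂ B₂ m n (-((m:ℤ) + 1)) (-((n:ℤ) + 1)) (by omega) (by omega)
      (cneg₁ m) (cneg₁ n) (cpos₂ m) (cpos₂ n)]
    rw [ContinuousLinearMap.one_apply]
    by_cases hmn : m = n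
    · subst hmn
      rw [if_pos rfl, show el m = lp.single 2 m 1 from rfl, lp.single_apply_self]
    · rw [if_neg (by omega), show el n = lp.single 2 n 1 from rfl,
        lp.single_apply_ne 2 n 1 hmn]
  · refine clm_ext_el fun n => lp.ext (funext fun m => ?_)
    rw [entry hG B₃ B₁ B₄ B₂ m n (((m:ℤ) + 1)) (-((n:ℤ) + 1)) (by omega) (by omega)
      (cneg₃ m) (cneg₁ n) (cpos₄ m) (cpos₂ n)]
    rw [if_neg (by omega)]
    simp
  · refine clm_ext_el fun n => lp.ext (funext fun m => ?_)
    rw [entry hG B₁ B₃ B₂ B₄ m n (-((m:ℤ) + 1)) (((n:ℤ) + 1)) (by omega) (by omega)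
      (cneg₁ m) (cneg₃ n) (cpos₂ m) (cpos₄ n)]
    rw [if_neg (by omega)]
    simp
  · refine clm_ext_el fun n => lp.ext (funext fun m => ?_)
    rw [entry hG B₃ B₃ B₄ B₄ m n (((m:ℤ) + 1)) (((n:ℤ) + 1)) (by omega) (by omega)
      (cneg₃ m) (cneg₃ n) (cpos₄ m) (cpos₄ n)]
    rw [ContinuousLinearMap.one_apply]
    by_cases hmn : m = n
    · subst hmn
      rw [if_pos rfl, show el m = lp.single 2 m 1 from rfl, lp.single_apply_self]
    · rw [if_neg (by omega), show el n = lp.single 2 n 1 from rfl,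
        lp.single_apply_ne 2 n 1 hmn]

end
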